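/- If gr_0(F) and gr_i(F) for every i ≥ 1 are finitely generated projective R-modules, and there exists N such that F N = ⊤, then Rees(A, F) is a finitely generated projective module over the polynomial ring R[X]. -/

import Mathlib

set_option linter.unusedSectionVars false
set_option maxHeartbeats 1000000

open Polynomial

section strip
variable {R A : Type*} [CommRing R] [CommRing A] [Algebra R A]

/-- Iteratively strip top graded components. -/
def strip (t : ℕ → A → A) (N : ℕ) : ℕ → A → A
  | 0, a => a
  | k+1, a => strip t N k a - t (N - k) (strip t N k a)

variable {F : ℕ → Submodule R A} {t : ℕ → A → A} {N : ℕ}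
variable (hmono : Monotone F)
variable (ht_mem : ∀ j a, a ∈ F (j+1) → a - t (j+1) a ∈ F j)
variable (ht_zero : ∀ j a, a ∈ F j → t (j+1) a = 0)
variable (ht_add : ∀ j a b, a ∈ F j → b ∈ F j → t j (a + b) = t j a + t j b)
variable (ht_smul : ∀ j (r : R) a, a ∈ F j → t j (r • a) = r • t j a)

include ht_mem in
theorem strip_mem : ∀ k, k ≤ N → ∀ a, a ∈ F N → strip t N k a ∈ F (N - k) := by
  intro k
  induction k with
  | zero => intro _ a ha; simpa [strip] using ha
  | succ k ih =>
    intro hk a ha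
    have h1 : strip t N k a ∈ F (N - k) := ih (by omega) a ha
    have h2 : N - k = (N - (k+1)) + 1 := by omega
    rw [h2] at h1
    simpa [strip, h2] using ht_mem _ _ h1

include hmono ht_zero in
theorem strip_eq_of_mem {i : ℕ} : ∀ k, k ≤ N → i ≤ N - k → ∀ a, a ∈ F i →
    strip t N k a = a := by
  intro k
  induction k with
  | zero => intro _ _ a _; rfl
  | succ k ih =>
    intro hk hi a ha
    have h1 : strip t N k a = a := ih (by omega) (by omega) a ha
    have h2 : N - k = (N - (k+1)) + 1 := by omega
    have h3 : a ∈ F (N - (k+1)) := hmono (by omega) ha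
    have h4 : t (N - k) a = 0 := by rw [h2]; exact ht_zero _ a h3
    simp [strip, h1, h4]

include hmono ht_mem ht_add in
theorem strip_add : ∀ k, k ≤ N → ∀ a b, a ∈ F N → b ∈ F N →
    strip t N k (a + b) = strip t N k a + strip t N k b := by
  intro k
  induction k with
  | zero => intro _ a b _ _; rfl
  | succ k ih =>
    intro hk a b ha hb
    have h2 : N - k = (N - (k+1)) + 1 := by omega
    have hma : strip t N k a ∈ F (N - k) := strip_mem ht_mem k (by omega) a ha
    have hmb : strip t N k b ∈ F (N - k) := strip_mem ht_mem k (by omega) b hb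
    have := ht_add (N - k) _ _ hma hmb
    simp only [strip, ih (by omega) a b ha hb, this]
    ring

include hmono ht_mem ht_smul in
theorem strip_smul : ∀ k, k ≤ N → ∀ (r : R) a, a ∈ F N →
    strip t N k (r • a) = r • strip t N k a := by
  intro k
  induction k with
  | zero => intro _ r a _; rfl
  | succ k ih =>
    intro hk r a ha
    have hma : strip t N k a ∈ F (N - k) := strip_mem ht_mem k (by omega) a ha
    have := ht_smul (N - k) r _ hma
    simp only [strip, ih (by omega) r a ha, this, smul_sub]

include ht_mem in
theorem strip_telescope : ∀ k, k ≤ N → ∀ a, a ∈ F N →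
    a = strip t N k a + ∑ j ∈ Finset.Ioc (N - k) N, t j (strip t N (N - j) a) := by
  intro k
  induction k with
  | zero => intro _ a _; simp [strip]
  | succ k ih =>
    intro hk a ha
    have h0 : a = strip t N k a + ∑ j ∈ Finset.Ioc (N - k) N, t j (strip t N (N - j) a) :=
      ih (by omega) a ha
    have hins : Finset.Ioc (N - (k+1)) N = insert (N - k) (Finset.Ioc (N - k) N) := by
      ext x; simp [Finset.mem_Ioc, Finset.mem_insert]; omega
    rw [hins, Finset.sum_insert (by simp [Finset.mem_Ioc])]
    have hNk : N - (N - k) = k := by omega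
    rw [hNk]
    nth_rewrite 1 [h0]
    simp only [strip]
    ring

end strip

/-- With `F` a monotone multiplicative exhaustive filtration on a commutative
`R`-algebra `A` with `1 ∈ F 0`, if `gr_0(F) = F 0` and the graded pieces
`gr_i(F) = F i ⧸ F (i-1)` (for `i ≥ 1`) are finitely generated projective `R`-modules, and
`F N = ⊤` for some `N`, then the Rees algebra `{p : A[X] | ∀ i, p.coeff i ∈ F i}` is a
finitely generated projective module over the polynomial ring `R[X]`, where the
`R[X]`-module structure comes from the coefficient-wise map `R[X] → A[X]`. -/
theorem stmt2 (R A : Type*) [CommRing R] [CommRing A] [Algebra R A]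
    (F : ℕ → Submodule R A) (hmono : Monotone F) (hone : (1 : A) ∈ F 0)
    (hmul : ∀ i j, F i * F j ≤ F (i + j)) (hsup : (⨆ i, F i) = ⊤)
    (hfin0 : Module.Finite R (F 0)) (hproj0 : Module.Projective R (F 0))
    (hfin : ∀ i, 1 ≤ i →
      Module.Finite R (F i ⧸ Submodule.comap (F i).subtype (F (i - 1))))
    (hproj : ∀ i, 1 ≤ i →
      Module.Projective R (F i ⧸ Submodule.comap (F i).subtype (F (i - 1))))
    (hN : ∃ N, F N = ⊤) :
    letI : Algebra (Polynomial R) (Polynomial A) :=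
      (Polynomial.mapRingHom (algebraMap R A)).toAlgebra
    ∀ T : Subalgebra (Polynomial R) (Polynomial A),
      (T : Set (Polynomial A)) = {p : Polynomial A | ∀ i, p.coeff i ∈ F i} →
      Module.Finite (Polynomial R) T ∧ Module.Projective (Polynomial R) T := by
  classical
  letI : Algebra (Polynomial R) (Polynomial A) :=
    (Polynomial.mapRingHom (algebraMap R A)).toAlgebra
  intro T hT
  obtain ⟨N, hFN⟩ := hN
  have hmemT : ∀ p : Polynomial A, p ∈ T ↔ ∀ i, p.coeff i ∈ F i := by
    intro p
    constructor
    · intro h i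
      have : p ∈ (T : Set (Polynomial A)) := h
      rw [hT] at this; exact this i
    · intro h
      show p ∈ (T : Set (Polynomial A))
      rw [hT]; exact h
  have coe_smul : ∀ (q : Polynomial R) (p : T),
      ((q • p : T) : Polynomial A) = q.map (algebraMap R A) * (p : Polynomial A) := by
    intro q p
    rw [Subalgebra.coe_smul, Algebra.smul_def, RingHom.algebraMap_toAlgebra]
    rfl
  -- sections of the quotient maps
  have hsec : ∀ j : ℕ, ∃ s : (↥(F (j+1)) ⧸ Submodule.comap (F (j+1)).subtype (F j)) →ₗ[R] F (j+1),
      ∀ q, (Submodule.comap (F (j+1)).subtype (F j)).mkQ (s q) = q := by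
    intro j
    haveI hpj : Module.Projective R (↥(F (j+1)) ⧸ Submodule.comap (F (j+1)).subtype (F j)) :=
      hproj (j+1) (by omega)
    obtain ⟨sj, hsj⟩ := Module.projective_lifting_property
      (Submodule.comap (F (j+1)).subtype (F j)).mkQ LinearMap.id
      (Submodule.mkQ_surjective _)
    exact ⟨sj, fun q => by have := LinearMap.congr_fun hsj q; simpa using this⟩
  choose s hs using hsec
  -- the splitting maps as linear maps on F (j+1)
  let tl : (j : ℕ) → (F (j+1) →ₗ[R] A) := fun j =>
    (F (j+1)).subtype ∘ₗ (s j) ∘ₗ (Submodule.comap (F (j+1)).subtype (F j)).mkQ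
  -- the splitting maps as bare functions on A
  let t : ℕ → A → A := fun j => match j with
    | 0 => fun _ => 0
    | (j'+1) => fun a => if h : a ∈ F (j'+1) then tl j' ⟨a, h⟩ else 0
  have ht_eq : ∀ j (x : F (j+1)), t (j+1) (x : A) = tl j x := by
    intro j x
    show (if h : (x : A) ∈ F (j+1) then tl j ⟨(x : A), h⟩ else 0) = tl j x
    rw [dif_pos x.2]
  have ht_mem : ∀ j a, a ∈ F (j+1) → a - t (j+1) a ∈ F j := by
    intro j a h
    rw [ht_eq j ⟨a, h⟩]
    have h2 : (Submodule.comap (F (j+1)).subtype (F j)).mkQ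
        ((⟨a, h⟩ : F (j+1)) - s j (Submodule.Quotient.mk ⟨a, h⟩)) = 0 := by
      rw [map_sub, hs, Submodule.mkQ_apply, sub_self]
    rw [Submodule.mkQ_apply, Submodule.Quotient.mk_eq_zero] at h2
    simpa [tl] using h2
  have ht_zero : ∀ j a, a ∈ F j → t (j+1) a = 0 := by
    intro j a h
    have h1 : a ∈ F (j+1) := hmono (Nat.le_succ j) h
    rw [ht_eq j ⟨a, h1⟩]
    show ((s j ((Submodule.comap (F (j+1)).subtype (F j)).mkQ ⟨a, h1⟩) : F (j+1)) : A) = 0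
    have : (Submodule.comap (F (j+1)).subtype (F j)).mkQ ⟨a, h1⟩ = 0 := by
      rw [Submodule.mkQ_apply, Submodule.Quotient.mk_eq_zero]; exact h
    rw [this, map_zero, Submodule.coe_zero]
  have ht_add : ∀ j a b, a ∈ F j → b ∈ F j → t j (a + b) = t j a + t j b := by
    intro j a b ha hb
    match j with
    | 0 => show (0:A) = 0 + 0; rw [add_zero]
    | (j'+1) =>
      have e1 := ht_eq j' (⟨a, ha⟩ + ⟨b, hb⟩)
      rw [Submodule.coe_add] at e1
      rw [e1, map_add, ← ht_eq, ← ht_eq]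
  have ht_smul : ∀ j (r : R) a, a ∈ F j → t j (r • a) = r • t j a := by
    intro j r a ha
    match j with
    | 0 => show (0:A) = r • 0; rw [smul_zero]
    | (j'+1) =>
      have e1 := ht_eq j' (r • ⟨a, ha⟩)
      rw [Submodule.coe_smul] at e1
      rw [e1, map_smul, ← ht_eq]
  -- complements
  let CC : ℕ → Submodule R A := fun j => match j with
    | 0 => F 0
    | (j'+1) => LinearMap.range ((F (j'+1)).subtype ∘ₗ s j')
  have hCle : ∀ j, CC j ≤ F j := by
    intro j
    match j with
    | 0 => exact le_refl _
    | (j'+1) =>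
      rintro x hx
      obtain ⟨q, rfl⟩ := hx
      exact ((s j') q).2
  have ht_memC : ∀ j (x : F (j+1)), tl j x ∈ CC (j+1) := by
    intro j x
    exact ⟨(Submodule.comap (F (j+1)).subtype (F j)).mkQ x, rfl⟩
  have hCfin : ∀ j, Module.Finite R (CC j) := by
    intro j
    match j with
    | 0 => exact hfin0
    | (j'+1) =>
      haveI : Module.Finite R (↥(F (j'+1)) ⧸ Submodule.comap (F (j'+1)).subtype (F j')) :=
        hfin (j'+1) (by omega)
      have hinj : Function.Injective ((F (j'+1)).subtype ∘ₗ s j') := by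
        intro q1 q2 hq
        have : s j' q1 = s j' q2 := Subtype.ext (by simpa using hq)
        have h2 := hs j' q1
        rw [this, hs j'] at h2
        exact h2.symm ▸ rfl
      exact Module.Finite.equiv (LinearEquiv.ofInjective _ hinj)
  have hCproj : ∀ j, Module.Projective R (CC j) := by
    intro j
    match j with
    | 0 => exact hproj0
    | (j'+1) =>
      haveI : Module.Projective R (↥(F (j'+1)) ⧸ Submodule.comap (F (j'+1)).subtype (F j')) :=
        hproj (j'+1) (by omega)
      have hinj : Function.Injective ((F (j'+1)).subtype ∘ₗ s j') := by
        intro q1 q2 hq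
        have : s j' q1 = s j' q2 := Subtype.ext (by simpa using hq)
        have h2 := hs j' q1
        rw [this, hs j'] at h2
        exact h2.symm ▸ rfl
      exact Module.Projective.of_equiv (LinearEquiv.ofInjective _ hinj)
  -- the projections
  have hmemN : ∀ a : A, a ∈ F N := fun a => hFN ▸ Submodule.mem_top
  let pr : ℕ → A → A := fun j => match j with
    | 0 => fun a => strip t N N a
    | (j'+1) => fun a => t (j'+1) (strip t N (N - (j'+1)) a)
  have hpr_memC : ∀ j, j ≤ N → ∀ a, pr j a ∈ CC j := by
    intro j hj a
    match j with
    | 0 =>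
      show strip t N N a ∈ CC 0
      have := strip_mem ht_mem N (le_refl N) a (hmemN a)
      rwa [Nat.sub_self] at this
    | (j'+1) =>
      show t (j'+1) (strip t N (N - (j'+1)) a) ∈ CC (j'+1)
      have h1 : strip t N (N - (j'+1)) a ∈ F (N - (N - (j'+1))) :=
        strip_mem ht_mem (N - (j'+1)) (by omega) a (hmemN a)
      have h2 : N - (N - (j'+1)) = j'+1 := by omega
      rw [h2] at h1
      rw [ht_eq j' ⟨_, h1⟩]
      exact ht_memC j' _
  have hpr_add : ∀ j, j ≤ N → ∀ a b, pr j (a + b) = pr j a + pr j b := by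
    intro j hj a b
    match j with
    | 0 =>
      exact strip_add hmono ht_mem ht_add N (le_refl N) a b (hmemN a) (hmemN b)
    | (j'+1) =>
      show t (j'+1) (strip t N (N - (j'+1)) (a+b)) = _ + _
      rw [strip_add hmono ht_mem ht_add (N - (j'+1)) (by omega) a b (hmemN a) (hmemN b)]
      have h2 : N - (N - (j'+1)) = j'+1 := by omega
      have hma : strip t N (N - (j'+1)) a ∈ F (j'+1) := by
        have := strip_mem ht_mem (N - (j'+1)) (by omega) a (hmemN a); rwa [h2] at this
      have hmb : strip t N (N - (j'+1)) b ∈ F (j'+1) := by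
        have := strip_mem ht_mem (N - (j'+1)) (by omega) b (hmemN b); rwa [h2] at this
      exact ht_add (j'+1) _ _ hma hmb
  have hpr_smul : ∀ j, j ≤ N → ∀ (r : R) a, pr j (r • a) = r • pr j a := by
    intro j hj r a
    match j with
    | 0 =>
      exact strip_smul hmono ht_mem ht_smul N (le_refl N) r a (hmemN a)
    | (j'+1) =>
      show t (j'+1) (strip t N (N - (j'+1)) (r • a)) = r • _
      rw [strip_smul hmono ht_mem ht_smul (N - (j'+1)) (by omega) r a (hmemN a)]
      have h2 : N - (N - (j'+1)) = j'+1 := by omega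
      have hma : strip t N (N - (j'+1)) a ∈ F (j'+1) := by
        have := strip_mem ht_mem (N - (j'+1)) (by omega) a (hmemN a); rwa [h2] at this
      exact ht_smul (j'+1) r _ hma
  have hpr_zero : ∀ j, j ≤ N → pr j 0 = 0 := by
    intro j hj
    have := hpr_smul j hj 0 0
    rwa [zero_smul, zero_smul] at this
  have hpr_total : ∀ a : A, ∑ j ∈ Finset.range (N+1), pr j a = a := by
    intro a
    have h0 := strip_telescope ht_mem N (le_refl N) a (hmemN a)
    rw [Nat.sub_self] at h0
    have hins : Finset.range (N+1) = insert 0 (Finset.Ioc 0 N) := by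
      ext x; simp [Finset.mem_range, Finset.mem_Ioc] <;> omega
    rw [hins, Finset.sum_insert (by simp)]
    have : ∑ j ∈ Finset.Ioc 0 N, pr j a = ∑ j ∈ Finset.Ioc 0 N, t j (strip t N (N - j) a) := by
      refine Finset.sum_congr rfl ?_
      intro j hj
      match j with
      | 0 => simp at hj
      | (j'+1) => rfl
    rw [this]
    exact h0.symm
  have hpr_vanish : ∀ i j, i < j → j ≤ N → ∀ a, a ∈ F i → pr j a = 0 := by
    intro i j hij hj a ha
    match j with
    | (j'+1) =>
      show t (j'+1) (strip t N (N - (j'+1)) a) = 0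
      rw [strip_eq_of_mem hmono ht_zero (N - (j'+1)) (by omega) (by omega) a ha]
      exact ht_zero j' a (hmono (by omega) ha)
  -- finite free covers of the complements
  have hex : ∀ j : ℕ, ∃ nj : ℕ,
      ∃ fgj : ((Fin nj → R) →ₗ[R] CC j) × ((CC j) →ₗ[R] (Fin nj → R)),
      ∀ c, fgj.1 (fgj.2 c) = c := by
    intro j
    haveI := hCfin j
    haveI := hCproj j
    obtain ⟨nj, f, hf⟩ := Module.Finite.exists_fin' R (CC j)
    obtain ⟨g, hg⟩ := Module.projective_lifting_property f LinearMap.id hf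
    exact ⟨nj, ⟨f, g⟩, fun c => by have := LinearMap.congr_fun hg c; simpa using this⟩
  choose n fg hfg using hex
  -- the index type of the free module
  let ι : Type _ := (j : Fin (N+1)) × Fin (n (j : ℕ))
  have hjle : ∀ j : Fin (N+1), (j : ℕ) ≤ N := fun j => Nat.lt_succ_iff.mp j.2
  let bv : ι → A := fun x => ((fg (x.1 : ℕ)).1 (Pi.single x.2 1) : A)
  have hbv : ∀ x : ι, bv x ∈ CC (x.1 : ℕ) := fun x => SetLike.coe_mem _
  let elt : ι → T := fun x => ⟨(Polynomial.C (bv x)) * Polynomial.X ^ (x.1 : ℕ), by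
    rw [hmemT]
    intro i
    rw [Polynomial.coeff_C_mul, Polynomial.coeff_X_pow]
    split_ifs with h
    · rw [mul_one, h]
      exact hCle _ (hbv x)
    · rw [mul_zero]; exact zero_mem _⟩
  let bigπ : (ι → Polynomial R) →ₗ[Polynomial R] T :=
    ∑ x : ι, (LinearMap.proj x).smulRight (elt x)
  have bigπ_apply : ∀ v : ι → Polynomial R, bigπ v = ∑ x : ι, v x • elt x := by
    intro v
    simp [bigπ, LinearMap.sum_apply]
  -- the coordinate functions
  let gpr : (j : Fin (N+1)) → A → (Fin (n (j : ℕ)) → R) := fun j a =>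
    (fg (j : ℕ)).2 ⟨pr (j : ℕ) a, hpr_memC (j : ℕ) (hjle j) a⟩
  have gpr_add : ∀ (j : Fin (N+1)) a b, gpr j (a + b) = gpr j a + gpr j b := by
    intro j a b
    show (fg (j:ℕ)).2 _ = (fg (j:ℕ)).2 _ + (fg (j:ℕ)).2 _
    rw [← map_add]
    congr 1
    exact Subtype.ext (hpr_add _ (hjle j) a b)
  have gpr_smul : ∀ (j : Fin (N+1)) (r : R) a, gpr j (r • a) = r • gpr j a := by
    intro j r a
    show (fg (j:ℕ)).2 _ = r • (fg (j:ℕ)).2 _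
    rw [← map_smul]
    congr 1
    exact Subtype.ext (hpr_smul _ (hjle j) r a)
  have gpr_zero : ∀ (j : Fin (N+1)), gpr j 0 = 0 := by
    intro j
    show (fg (j:ℕ)).2 _ = 0
    rw [show (⟨pr (j:ℕ) 0, hpr_memC (j:ℕ) (hjle j) 0⟩ : CC (j:ℕ)) = 0 from
      Subtype.ext (hpr_zero _ (hjle j)), map_zero]
  -- the coordinate map
  let σf : Polynomial A → ι → Polynomial R := fun p x =>
    ∑ i ∈ p.support, if (x.1 : ℕ) ≤ i then
      (Polynomial.monomial (i - (x.1 : ℕ))) (gpr x.1 (p.coeff i) x.2) else 0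
  have σf_eq : ∀ (p : Polynomial A) (u : Finset ℕ), p.support ⊆ u → ∀ x : ι,
      σf p x = ∑ i ∈ u, if (x.1 : ℕ) ≤ i then
        (Polynomial.monomial (i - (x.1 : ℕ))) (gpr x.1 (p.coeff i) x.2) else 0 := by
    intro p u hu x
    refine Finset.sum_subset hu ?_
    intro i _ hi
    have h0 : p.coeff i = 0 := Polynomial.notMem_support_iff.mp hi
    rw [h0, gpr_zero]
    split_ifs <;> simp
  have σf_add : ∀ p q : Polynomial A, σf (p + q) = σf p + σf q := by
    intro p q
    funext x
    have hsub1 : p.support ⊆ p.support ∪ q.support := Finset.subset_union_left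
    have hsub2 : q.support ⊆ p.support ∪ q.support := Finset.subset_union_right
    have hsub3 : (p + q).support ⊆ p.support ∪ q.support := Polynomial.support_add
    rw [Pi.add_apply, σf_eq (p+q) _ hsub3 x, σf_eq p _ hsub1 x, σf_eq q _ hsub2 x,
      ← Finset.sum_add_distrib]
    refine Finset.sum_congr rfl ?_
    intro i _
    rw [Polynomial.coeff_add, gpr_add]
    split_ifs with h
    · rw [Pi.add_apply, map_add]
    · rw [add_zero]
  have σf_Csmul : ∀ (r : R) (p : Polynomial A),
      σf (Polynomial.C (algebraMap R A r) * p) = Polynomial.C r • σf p := by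
    intro r p
    funext x
    have hsub : (Polynomial.C (algebraMap R A r) * p).support ⊆ p.support := by
      intro i hi
      rw [Polynomial.mem_support_iff, Polynomial.coeff_C_mul] at hi
      rw [Polynomial.mem_support_iff]
      exact fun h => hi (by rw [h, mul_zero])
    rw [Pi.smul_apply, σf_eq _ _ hsub x, smul_eq_mul, Finset.mul_sum]
    refine Finset.sum_congr rfl ?_
    intro i _
    rw [Polynomial.coeff_C_mul, ← Algebra.smul_def, gpr_smul]
    split_ifs with h
    · rw [Pi.smul_apply, smul_eq_mul, Polynomial.C_mul_monomial]
    · rw [mul_zero]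
  have σf_X : ∀ p : Polynomial A, (∀ i, p.coeff i ∈ F i) →
      σf (Polynomial.X * p) = fun x => Polynomial.X * σf p x := by
    intro p hp
    funext x
    have hsub : (Polynomial.X * p).support ⊆ insert 0 (p.support.image (· + 1)) := by
      intro i hi
      rw [Polynomial.mem_support_iff] at hi
      match i with
      | 0 => exact Finset.mem_insert_self 0 _
      | (i'+1) =>
        refine Finset.mem_insert_of_mem (Finset.mem_image.mpr ⟨i', ?_, rfl⟩)
        rw [Polynomial.mem_support_iff]
        rwa [Polynomial.coeff_X_mul] at hi
    rw [σf_eq _ _ hsub x, Finset.sum_insert (by simp), Finset.sum_image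
      (fun a _ b _ h => by omega), Finset.mul_sum]
    have h00 : (Polynomial.X * p).coeff 0 = 0 := by
      rw [Polynomial.mul_coeff_zero, Polynomial.coeff_X_zero, zero_mul]
    have hz : (if (x.1 : ℕ) ≤ 0 then
        (Polynomial.monomial (0 - (x.1 : ℕ))) (gpr x.1 ((Polynomial.X * p).coeff 0) x.2)
        else 0) = 0 := by
      rw [h00, gpr_zero]
      split_ifs <;> simp
    rw [hz, zero_add]
    refine Finset.sum_congr rfl ?_
    intro i _
    rw [Polynomial.coeff_X_mul]
    rcases le_or_gt (x.1 : ℕ) i with h | h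
    · rw [if_pos (by omega), if_pos h, show i + 1 - (x.1 : ℕ) = (i - (x.1 : ℕ)) + 1 by omega,
        ← Polynomial.monomial_mul_X, mul_comm]
    · rw [if_neg (show ¬ ((x.1 : ℕ) ≤ i) by omega), mul_zero]
      rcases eq_or_lt_of_le (show i + 1 ≤ (x.1 : ℕ) by omega) with h2 | h2
      · rw [if_pos (by omega)]
        have : pr (x.1 : ℕ) (p.coeff i) = 0 :=
          hpr_vanish i (x.1 : ℕ) (by omega) (hjle x.1) _ (hp i)
        have hgz : gpr x.1 (p.coeff i) = 0 := by
          show (fg ((x.1:ℕ))).2 _ = 0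
          rw [show (⟨pr ((x.1:ℕ)) (p.coeff i), hpr_memC _ (hjle x.1) _⟩ : CC ((x.1:ℕ))) = 0 from
            Subtype.ext this, map_zero]
        rw [hgz]
        simp
      · rw [if_neg (by omega)]
  have σf_mono : ∀ (m : ℕ) (r : R) (p : Polynomial A), (∀ i, p.coeff i ∈ F i) →
      σf ((Polynomial.monomial m r).map (algebraMap R A) * p)
        = (Polynomial.monomial m r) • σf p := by
    intro m
    induction m with
    | zero =>
      intro r p hp
      rw [Polynomial.map_monomial, Polynomial.monomial_zero_left, Polynomial.monomial_zero_left]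
      exact σf_Csmul r p
    | succ m ih =>
      intro r p hp
      have hp' : ∀ i, (Polynomial.X * p).coeff i ∈ F i := by
        intro i
        match i with
        | 0 =>
          rw [Polynomial.mul_coeff_zero, Polynomial.coeff_X_zero, zero_mul]
          exact zero_mem _
        | (i'+1) =>
          rw [Polynomial.coeff_X_mul]
          exact hmono (Nat.le_succ i') (hp i')
      rw [← Polynomial.monomial_mul_X, Polynomial.map_mul, Polynomial.map_X, mul_assoc,
        ih r (Polynomial.X * p) hp', σf_X p hp]
      funext x
      rw [Pi.smul_apply, Pi.smul_apply, smul_eq_mul, smul_eq_mul, ← mul_assoc,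
        Polynomial.monomial_mul_X]
  have σf_mul : ∀ (q : Polynomial R) (p : Polynomial A), (∀ i, p.coeff i ∈ F i) →
      σf (q.map (algebraMap R A) * p) = q • σf p := by
    intro q
    induction q using Polynomial.induction_on' with
    | add q1 q2 ih1 ih2 =>
      intro p hp
      rw [Polynomial.map_add, add_mul, σf_add, ih1 p hp, ih2 p hp, add_smul]
    | monomial m r => exact σf_mono m r
  let σl : T →ₗ[Polynomial R] (ι → Polynomial R) :=
    { toFun := fun p => σf (p : Polynomial A)
      map_add' := by
        intro p q
        rw [← σf_add]
        norm_cast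
      map_smul' := by
        intro q p
        simp only [RingHom.id_apply]
        rw [coe_smul, σf_mul q _ ((hmemT _).mp p.2)] }
  -- the section identity
  have hid : ∀ p : T, bigπ (σl p) = p := by
    intro p
    have hp : ∀ i, (p : Polynomial A).coeff i ∈ F i := (hmemT _).mp p.2
    apply Subtype.ext
    rw [bigπ_apply]
    have hcoe : ((∑ x : ι, σl p x • elt x : T) : Polynomial A)
        = ∑ x : ι, ((σl p x • elt x : T) : Polynomial A) :=
      AddSubmonoidClass.coe_finset_sum _ _
    rw [hcoe]
    set u := (p : Polynomial A).support with hu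
    have key : ∀ x : ι, ((σl p x • elt x : T) : Polynomial A)
        = ∑ i ∈ u, (if (x.1 : ℕ) ≤ i then
            Polynomial.C ((gpr x.1 ((p : Polynomial A).coeff i) x.2) • bv x)
              * Polynomial.X ^ i else 0) := by
      intro x
      rw [coe_smul]
      have hσ : σl p x = σf (p : Polynomial A) x := rfl
      have helt : ((elt x : T) : Polynomial A)
          = Polynomial.C (bv x) * Polynomial.X ^ (x.1 : ℕ) := rfl
      rw [hσ, helt, σf_eq (p : Polynomial A) u subset_rfl x, Polynomial.map_sum,
        Finset.sum_mul]
      refine Finset.sum_congr rfl ?_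
      intro i _
      split_ifs with h
      · rw [Polynomial.map_monomial, ← Polynomial.C_mul_X_pow_eq_monomial]
        calc Polynomial.C (algebraMap R A (gpr x.1 ((p : Polynomial A).coeff i) x.2))
              * Polynomial.X ^ (i - (x.1 : ℕ))
              * (Polynomial.C (bv x) * Polynomial.X ^ (x.1 : ℕ))
            = Polynomial.C (algebraMap R A (gpr x.1 ((p : Polynomial A).coeff i) x.2))
                * Polynomial.C (bv x)
                * (Polynomial.X ^ (i - (x.1 : ℕ)) * Polynomial.X ^ (x.1 : ℕ)) := by ring
          _ = Polynomial.C (algebraMap R A (gpr x.1 ((p : Polynomial A).coeff i) x.2) * bv x)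
                * Polynomial.X ^ ((i - (x.1 : ℕ)) + (x.1 : ℕ)) := by
              rw [← Polynomial.C_mul, ← pow_add]
          _ = _ := by
              rw [← Algebra.smul_def, show (i - (x.1 : ℕ)) + (x.1 : ℕ) = i from by omega]
      · rw [Polynomial.map_zero, zero_mul]
    rw [Finset.sum_congr rfl (fun x _ => key x)]
    rw [show (Finset.univ : Finset ι) = (Finset.univ.sigma fun _ => Finset.univ) from
      (Finset.univ_sigma_univ).symm, Finset.sum_sigma]
    have inner1 : ∀ (j : Fin (N+1)) (i : ℕ),
        (∑ k : Fin (n (j : ℕ)), if (j : ℕ) ≤ i then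
          Polynomial.C ((gpr j ((p : Polynomial A).coeff i) k) • bv ⟨j, k⟩)
            * Polynomial.X ^ i else 0)
        = if (j : ℕ) ≤ i then
            Polynomial.C (pr (j : ℕ) ((p : Polynomial A).coeff i)) * Polynomial.X ^ i
          else 0 := by
      intro j i
      split_ifs with h
      · have hsum : ∑ k : Fin (n (j : ℕ)),
            (gpr j ((p : Polynomial A).coeff i) k) • bv ⟨j, k⟩
            = pr (j : ℕ) ((p : Polynomial A).coeff i) := by
          have h2 := LinearMap.pi_apply_eq_sum_univ ((fg (j : ℕ)).1)
            (gpr j ((p : Polynomial A).coeff i))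
          have h3 : (((fg (j : ℕ)).1 (gpr j ((p : Polynomial A).coeff i)) : CC (j : ℕ)) : A)
              = ∑ k : Fin (n (j : ℕ)), (gpr j ((p : Polynomial A).coeff i) k) • bv ⟨j, k⟩ := by
            rw [h2, Submodule.coe_sum]
            refine Finset.sum_congr rfl (fun k _ => ?_)
            rw [Submodule.coe_smul]
            congr 1
            show (((fg (j : ℕ)).1 _ : CC (j : ℕ)) : A) = (((fg (j : ℕ)).1 (Pi.single k 1) : CC (j : ℕ)) : A)
            have hfun : (fun j_1 => if k = j_1 then (1:R) else 0) = Pi.single k 1 := by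
              funext k'
              simp [Pi.single_apply, eq_comm]
            rw [hfun]
          rw [← h3]
          show (((fg (j : ℕ)).1 ((fg (j : ℕ)).2
            ⟨pr (j : ℕ) ((p : Polynomial A).coeff i), _⟩) : CC (j : ℕ)) : A) = _
          rw [hfg]
        rw [← hsum, map_sum, Finset.sum_mul]
      · exact Finset.sum_const_zero
    have step1 : ∀ j : Fin (N+1),
        (∑ k : Fin (n (j : ℕ)), ∑ i ∈ u, if (j : ℕ) ≤ i then
          Polynomial.C ((gpr j ((p : Polynomial A).coeff i) k) • bv ⟨j, k⟩)
            * Polynomial.X ^ i else 0)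
        = ∑ i ∈ u, (if (j : ℕ) ≤ i then
            Polynomial.C (pr (j : ℕ) ((p : Polynomial A).coeff i)) * Polynomial.X ^ i
          else 0) := by
      intro j
      rw [Finset.sum_comm]
      exact Finset.sum_congr rfl (fun i _ => inner1 j i)
    rw [Finset.sum_congr rfl (fun j _ => step1 j), Finset.sum_comm]
    have inner2 : ∀ i ∈ u, (∑ j : Fin (N+1), if (j : ℕ) ≤ i then
          Polynomial.C (pr (j : ℕ) ((p : Polynomial A).coeff i)) * Polynomial.X ^ i
        else 0)
        = Polynomial.C ((p : Polynomial A).coeff i) * Polynomial.X ^ i := by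
      intro i _
      have e1 : ∀ j : Fin (N+1), (if (j : ℕ) ≤ i then
            Polynomial.C (pr (j : ℕ) ((p : Polynomial A).coeff i)) * Polynomial.X ^ i
          else 0)
          = Polynomial.C (if (j : ℕ) ≤ i then pr (j : ℕ) ((p : Polynomial A).coeff i) else 0)
            * Polynomial.X ^ i := by
        intro j
        split_ifs with h
        · rfl
        · rw [map_zero, zero_mul]
      rw [Finset.sum_congr rfl (fun j _ => e1 j), ← Finset.sum_mul, ← map_sum]
      congr 2
      rw [Fin.sum_univ_eq_sum_range
        (fun j => if j ≤ i then pr j ((p : Polynomial A).coeff i) else 0) (N+1)]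
      have e2 : ∀ j ∈ Finset.range (N+1),
          (if j ≤ i then pr j ((p : Polynomial A).coeff i) else 0)
          = pr j ((p : Polynomial A).coeff i) := by
        intro j hj
        split_ifs with h
        · rfl
        · exact (hpr_vanish i j (by omega)
            (Nat.lt_succ_iff.mp (Finset.mem_range.mp hj)) _ (hp i)).symm
      rw [Finset.sum_congr rfl e2, hpr_total]
    rw [Finset.sum_congr rfl inner2]
    conv_rhs => rw [Polynomial.as_sum_support (p : Polynomial A)]
    rw [← hu]
    exact Finset.sum_congr rfl (fun i _ => Polynomial.C_mul_X_pow_eq_monomial)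
  have hsurj : Function.Surjective bigπ := fun p => ⟨σl p, hid p⟩
  refine ⟨Module.Finite.of_surjective bigπ hsurj,
    Module.Projective.of_split σl bigπ (LinearMap.ext hid)⟩
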